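/- Let h : ℝᵈ → ℝ be differentiable with L-Lipschitz continuous gradient (equivalently, h(y) ≤ h(x) + ⟨∇h(x), y−x⟩ + (L/2)‖y−x‖² for all x,y), let S ⊆ ℝᵈ be nonempty, ψ : ℝᵈ → ℝ any function, H ∈ ℝ^{d×d} symmetric. Let x ∈ S and suppose x⁺ ∈ S minimizes y ↦ h(x) + ⟨∇h(x), y − x⟩ + ψ(y) + ½‖y − x‖²_H over y ∈ S. Then h(x) + ψ(x) ≥ h(x⁺) + ψ(x⁺) + ½‖x⁺ − x‖²_{H − L·I}. -/

import Mathlib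

open Matrix RealInnerProductSpace

variable {d : ℕ}

/-- The quadratic form `v ↦ vᵀMv` of a matrix `M`, evaluated on a Euclidean vector;
`‖v‖²_M = vᵀMv`. -/
noncomputable def quadForm (M : Matrix (Fin d) (Fin d) ℝ) (v : EuclideanSpace ℝ (Fin d)) : ℝ :=
  (fun i => v i) ⬝ᵥ (M *ᵥ fun i => v i)

/-- Descent estimate for the linearized proximal step: if `h` is differentiable with
`L`-Lipschitz gradient (in the equivalent form of the descent inequality), `S ⊆ ℝᵈ` is
nonempty, `ψ` arbitrary, `H` symmetric, `x ∈ S`, and `x⁺ ∈ S` minimizes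
`y ↦ h(x) + ⟨∇h(x), y−x⟩ + ψ(y) + ½‖y−x‖²_H` over `S`, then
`h(x) + ψ(x) ≥ h(x⁺) + ψ(x⁺) + ½‖x⁺−x‖²_{H−LI}`. -/
theorem stmt11 (h : EuclideanSpace ℝ (Fin d) → ℝ) (L : ℝ)
    (hdiff : Differentiable ℝ h)
    (hdesc : ∀ x y : EuclideanSpace ℝ (Fin d),
      h y ≤ h x + ⟪gradient h x, y - x⟫ + (L / 2) * ‖y - x‖ ^ 2)
    (S : Set (EuclideanSpace ℝ (Fin d))) (hS : S.Nonempty)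
    (ψ : EuclideanSpace ℝ (Fin d) → ℝ)
    (H : Matrix (Fin d) (Fin d) ℝ) (hH : H.IsSymm)
    (x xp : EuclideanSpace ℝ (Fin d)) (hx : x ∈ S) (hxp : xp ∈ S)
    (hmin : ∀ y ∈ S,
      h x + ⟪gradient h x, xp - x⟫ + ψ xp + (1 / 2) * quadForm H (xp - x)
        ≤ h x + ⟪gradient h x, y - x⟫ + ψ y + (1 / 2) * quadForm H (y - x)) :
    h x + ψ x ≥ h xp + ψ xp + (1 / 2) * quadForm (H - L • 1) (xp - x) := by
  have hm := hmin x hx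
  simp only [sub_self] at hm
  have hq0 : quadForm H (0 : EuclideanSpace ℝ (Fin d)) = 0 := by
    simp [quadForm]
  have hi0 : ⟪gradient h x, (0 : EuclideanSpace ℝ (Fin d))⟫ = 0 := inner_zero_right _
  rw [hq0, hi0] at hm
  have hd := hdesc x xp
  have hnorm : ‖xp - x‖ ^ 2 = (fun i => (xp - x) i) ⬝ᵥ (fun i => (xp - x) i) := by
    rw [← real_inner_self_eq_norm_sq]
    simp only [PiLp.inner_apply, dotProduct, RCLike.inner_apply, conj_trivial, mul_comm]
  have hsplit : quadForm (H - L • 1) (xp - x)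
      = quadForm H (xp - x) - L * ‖xp - x‖ ^ 2 := by
    simp [quadForm, Matrix.sub_mulVec, Matrix.smul_mulVec, dotProduct_sub,
      Matrix.one_mulVec, dotProduct_smul, hnorm, smul_eq_mul]
  rw [hsplit]
  nlinarith [hm, hd]
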